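/- Let C ⊆ 2^{{1,…,n}} be a combinatorial neural code, let σ, τ, v ∈ C, and suppose v is forced between σ and τ: every feasible path in the codeword containment graph G_C from σ to τ passes through v. If U = (U_1, …, U_n) is a convex realization of C in ℝ^d with all U_i open or all U_i closed, then for any x ∈ A_σ and y ∈ A_τ, the line segment from x to y contains a point of the atom A_v. -/

import Mathlib

/-- The atom of a subset `σ` of neurons with respect to a family of sets `U`:
`A_σ = (⋂_{i ∈ σ} U_i) \ (⋃_{j ∉ σ} U_j)`. -/
def atomOf {n : ℕ} {X : Type*} (U : Fin n → Set X) (σ : Set (Fin n)) : Set X :=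
  (⋂ i ∈ σ, U i) \ (⋃ j ∈ σᶜ, U j)

/-- The combinatorial code of a family of sets: the collection of subsets with
nonempty atom. -/
def codeOf {n : ℕ} {X : Type*} (U : Fin n → Set X) : Set (Set (Fin n)) :=
  {σ | (atomOf U σ).Nonempty}

/-- A feasible path (of length `L`, recorded as `p 0, …, p (L-1)`) in the codeword
containment graph of a code `C`. -/
def IsFeasiblePath {n : ℕ} (C : Set (Set (Fin n))) (L : ℕ) (p : ℕ → Set (Fin n)) : Prop :=
  1 ≤ L ∧ (∀ r < L, p r ∈ C) ∧
  (∀ r, r + 1 < L → p r ⊂ p (r + 1) ∨ p (r + 1) ⊂ p r) ∧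
  (∀ i j, i < j → j < L → p i ≠ p j) ∧
  (∀ i m j, i < m → m < j → j < L → p i ∩ p j ⊆ p m)

def FeasibleWalk {n : ℕ} (C : Set (Set (Fin n))) (L : ℕ) (p : ℕ → Set (Fin n)) : Prop :=
  1 ≤ L ∧ (∀ r < L, p r ∈ C) ∧
  (∀ r, r + 1 < L → p r ⊆ p (r + 1) ∨ p (r + 1) ⊆ p r) ∧
  (∀ i m j, i < m → m < j → j < L → p i ∩ p j ⊆ p m)

theorem exists_path_of_walk {n : ℕ} (C : Set (Set (Fin n))) :
    ∀ (L : ℕ) (p : ℕ → Set (Fin n)), FeasibleWalk C L p →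
    ∃ L' p', IsFeasiblePath C L' p' ∧ p' 0 = p 0 ∧ p' (L' - 1) = p (L - 1) ∧
      ∀ r < L', ∃ s < L, p' r = p s := by
  intro L
  induction L using Nat.strong_induction_on with
  | _ L IH =>
    intro p hw
    obtain ⟨hL1, hmem, hadj, hfeas⟩ := hw
    by_cases hdup : ∃ i j, i < j ∧ j < L ∧ p i = p j
    · obtain ⟨i, j, hij, hjL, hpij⟩ := hdup
      have hcong : ∀ a b : ℕ, a = b → p a = p b := fun a b h => by rw [h]
      set e : ℕ → ℕ := fun r => if r ≤ i then r else r + (j - i) with he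
      have heval : ∀ r, e r = if r ≤ i then r else r + (j - i) := fun r => rfl
      set L'' : ℕ := L - (j - i) with hL''
      have hL''lt : L'' < L := by omega
      have hemap : ∀ r < L'', e r < L := by
        intro r hr; rw [heval]; split_ifs <;> omega
      have hemono : ∀ a b, a < b → e a < e b := by
        intro a b hab; rw [heval, heval]; split_ifs <;> omega
      have hwalk : FeasibleWalk C L'' (fun r => p (e r)) := by
        refine ⟨by omega, fun r hr => hmem _ (hemap r hr), ?_, ?_⟩
        · intro r hr
          show p (e r) ⊆ p (e (r + 1)) ∨ p (e (r + 1)) ⊆ p (e r)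
          by_cases hrc : r + 1 ≤ i
          · have h1 : e r = r := by rw [heval]; split_ifs <;> omega
            have h2 : e (r + 1) = r + 1 := by rw [heval]; split_ifs <;> omega
            rw [h1, h2]
            exact hadj r (by omega)
          · by_cases hrc2 : r ≤ i
            · have h1 : e r = r := by rw [heval]; split_ifs <;> omega
              have h2 : e (r + 1) = j + 1 := by rw [heval]; split_ifs <;> omega
              have hj1 : j + 1 < L := by have := hemap (r + 1) hr; omega
              have hri : r = i := by omega
              rw [h1, h2, hri, hpij]
              exact hadj j hj1
            · have h1 : e (r + 1) = e r + 1 := by rw [heval, heval]; split_ifs <;> omega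
              rw [h1]
              refine hadj (e r) ?_
              have := hemap (r + 1) hr
              rw [h1] at this; omega
        · intro a m b ham hmb hbL
          exact hfeas _ _ _ (hemono _ _ ham) (hemono _ _ hmb) (hemap b hbL)
      obtain ⟨L', p', hpath, h0, hlast, hsub⟩ := IH L'' hL''lt _ hwalk
      refine ⟨L', p', hpath, ?_, ?_, ?_⟩
      · rw [h0]; exact hcong _ _ (by rw [heval]; split_ifs <;> omega)
      · rw [hlast]
        by_cases hc : L'' - 1 ≤ i
        · have h1 : e (L'' - 1) = L'' - 1 := by rw [heval]; split_ifs <;> omega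
          have h2 : L'' - 1 = i := by omega
          have h3 : j = L - 1 := by omega
          rw [h1, h2, hpij, h3]
        · have h1 : e (L'' - 1) = L - 1 := by rw [heval]; split_ifs <;> omega
          rw [h1]
      · intro r hr
        obtain ⟨s, hs, hps⟩ := hsub r hr
        exact ⟨e s, hemap s hs, hps⟩
    · push_neg at hdup
      refine ⟨L, p, ⟨hL1, hmem, ?_, fun a b hab hbL => hdup a b hab hbL, hfeas⟩, rfl, rfl,
        fun r hr => ⟨r, hr, rfl⟩⟩
      intro r hr
      rcases hadj r hr with h | h
      · exact Or.inl (h.ssubset_of_ne (hdup r (r + 1) (by omega) hr))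
      · exact Or.inr (h.ssubset_of_ne (Ne.symm (hdup r (r + 1) (by omega) hr)))

/-- If `v` is forced between `σ` and `τ` (every feasible path in `G_C` from `σ` to `τ`
passes through `v`), then in any convex (open or closed) realization, any line segment
from the atom of `σ` to the atom of `τ` contains a point of the atom of `v`. -/
theorem stmt3 {n d : ℕ} (C : Set (Set (Fin n)))
    (σ τ v : Set (Fin n)) (hσ : σ ∈ C) (hτ : τ ∈ C) (hv : v ∈ C)
    (hforced : ∀ (L : ℕ) (p : ℕ → Set (Fin n)), IsFeasiblePath C L p →
      p 0 = σ → p (L - 1) = τ → ∃ r < L, p r = v)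
    (U : Fin n → Set (EuclideanSpace ℝ (Fin d)))
    (hconv : ∀ i, Convex ℝ (U i))
    (hoc : (∀ i, IsOpen (U i)) ∨ (∀ i, IsClosed (U i)))
    (hcode : codeOf U = C)
    (x y : EuclideanSpace ℝ (Fin d))
    (hx : x ∈ atomOf U σ) (hy : y ∈ atomOf U τ) :
    ∃ z ∈ segment ℝ x y, z ∈ atomOf U v := by
  classical
  set z : ℝ → EuclideanSpace ℝ (Fin d) := fun t => AffineMap.lineMap x y t with hzdef
  have hz0 : z 0 = x := by simp [hzdef]
  have hz1 : z 1 = y := by simp [hzdef]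
  have hzc : Continuous z := by
    have : z = fun t : ℝ => t • (y - x) + x := by
      funext t; simp [hzdef, AffineMap.lineMap_apply]
    rw [this]
    exact (continuous_id.smul continuous_const).add continuous_const
  have hzseg : ∀ s ∈ Set.Icc (0:ℝ) 1, z s ∈ segment ℝ x y := by
    intro s hs
    rw [segment_eq_image_lineMap]
    exact ⟨s, hs, rfl⟩
  -- preimages
  set P : Fin n → Set ℝ := fun i => z ⁻¹' U i with hPdef
  have hPconv : ∀ i, Convex ℝ (P i) := fun i =>
    (hconv i).affine_preimage (AffineMap.lineMap x y)
  set S : Fin n → Set ℝ := fun i => Set.Icc (0:ℝ) 1 ∩ P i with hSdef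
  have hSconv : ∀ i, Convex ℝ (S i) := fun i => (convex_Icc 0 1).inter (hPconv i)
  have hS01 : ∀ i, S i ⊆ Set.Icc (0:ℝ) 1 := fun i => Set.inter_subset_left
  have hSbddA : ∀ i, BddAbove (S i) := fun i => BddAbove.mono (hS01 i) bddAbove_Icc
  have hSbddB : ∀ i, BddBelow (S i) := fun i => BddBelow.mono (hS01 i) bddBelow_Icc
  -- codewords
  set c : ℝ → Set (Fin n) := fun s => {i | z s ∈ U i} with hcdef
  have hcmem : ∀ s i, i ∈ c s ↔ z s ∈ U i := fun s i => Iff.rfl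
  have hatom : ∀ s, z s ∈ atomOf U (c s) := by
    intro s
    constructor
    · exact Set.mem_iInter₂.mpr fun i hi => hi
    · intro hmem
      obtain ⟨j, hj, hzj⟩ := Set.mem_iUnion₂.mp hmem
      exact hj hzj
  have hmemC : ∀ s, c s ∈ C := fun s => hcode ▸ ⟨z s, hatom s⟩
  have hc0 : c 0 = σ := by
    ext i
    rw [hcmem, hz0]
    constructor
    · intro h
      by_contra hi
      exact hx.2 (Set.mem_iUnion₂.mpr ⟨i, hi, h⟩)
    · intro h
      exact Set.mem_iInter₂.mp hx.1 i h
  have hc1 : c 1 = τ := by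
    ext i
    rw [hcmem, hz1]
    constructor
    · intro h
      by_contra hi
      exact hy.2 (Set.mem_iUnion₂.mpr ⟨i, hi, h⟩)
    · intro h
      exact Set.mem_iInter₂.mp hy.1 i h
  have horder : ∀ s1 s2 s3 : ℝ, s1 ≤ s2 → s2 ≤ s3 → c s1 ∩ c s3 ⊆ c s2 := by
    intro s1 s2 s3 h12 h23 i hi
    exact (hPconv i).ordConnected.out hi.1 hi.2 ⟨h12, h23⟩
  have hioo : ∀ i, (S i).Nonempty → Set.Ioo (sInf (S i)) (sSup (S i)) ⊆ S i := by
    intro i hne u hu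
    obtain ⟨s1, hs1, hs1u⟩ := exists_lt_of_csInf_lt hne hu.1
    obtain ⟨s2, hs2, hus2⟩ := exists_lt_of_lt_csSup hne hu.2
    exact (hSconv i).ordConnected.out hs1 hs2 ⟨hs1u.le, hus2.le⟩
  -- breakpoints
  set T : Finset ℝ := insert 0 (insert 1
    ((Finset.univ.image fun i => sInf (S i)) ∪ (Finset.univ.image fun i => sSup (S i)))) with hTdef
  have h0T : (0:ℝ) ∈ T := Finset.mem_insert_self _ _
  have h1T : (1:ℝ) ∈ T := Finset.mem_insert_of_mem (Finset.mem_insert_self _ _)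
  have hinfT : ∀ i, sInf (S i) ∈ T := by
    intro i
    refine Finset.mem_insert_of_mem (Finset.mem_insert_of_mem ?_)
    exact Finset.mem_union_left _ (Finset.mem_image.mpr ⟨i, Finset.mem_univ i, rfl⟩)
  have hsupT : ∀ i, sSup (S i) ∈ T := by
    intro i
    refine Finset.mem_insert_of_mem (Finset.mem_insert_of_mem ?_)
    exact Finset.mem_union_right _ (Finset.mem_image.mpr ⟨i, Finset.mem_univ i, rfl⟩)
  have hT01 : ∀ u ∈ T, u ∈ Set.Icc (0:ℝ) 1 := by
    intro u hu
    rw [hTdef] at hu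
    simp only [Finset.mem_insert, Finset.mem_union, Finset.mem_image] at hu
    rcases hu with rfl | rfl | ⟨i, -, rfl⟩ | ⟨i, -, rfl⟩
    · exact ⟨le_refl 0, zero_le_one⟩
    · exact ⟨zero_le_one, le_refl 1⟩
    · by_cases h : (S i).Nonempty
      · obtain ⟨s, hs⟩ := h
        exact ⟨le_csInf ⟨s, hs⟩ (fun b hb => (hS01 i hb).1),
          csInf_le_of_le (hSbddB i) hs (hS01 i hs).2⟩
      · rw [Set.not_nonempty_iff_eq_empty.mp h, Real.sInf_empty]
        exact ⟨le_refl 0, zero_le_one⟩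
    · by_cases h : (S i).Nonempty
      · obtain ⟨s, hs⟩ := h
        refine ⟨le_trans (hS01 i hs).1 (le_csSup (hSbddA i) hs), ?_⟩
        exact csSup_le ⟨s, hs⟩ (fun b hb => (hS01 i hb).2)
      · rw [Set.not_nonempty_iff_eq_empty.mp h, Real.sSup_empty]
        exact ⟨le_refl 0, zero_le_one⟩
  -- sorted list
  set l : List ℝ := T.sort (· ≤ ·) with hldef
  set k : ℕ := l.length with hkdef
  have hk1 : 1 ≤ k := by
    rw [hkdef]
    have : (0:ℝ) ∈ l := (Finset.mem_sort _).mpr h0T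
    exact List.length_pos_iff.mpr (List.ne_nil_of_mem this)
  set t : ℕ → ℝ := fun r => l.getD r 0 with htdef
  have htget : ∀ r (hr : r < l.length), t r = l.get ⟨r, hr⟩ := fun r hr => List.getD_eq_get l 0 ⟨r, hr⟩
  have htmemT : ∀ r < k, t r ∈ T := by
    intro r hr
    rw [htget r hr]
    exact (Finset.mem_sort _).mp (List.get_mem l ⟨r, hr⟩)
  have htsurj : ∀ u ∈ T, ∃ r < k, t r = u := by
    intro u hu
    have : u ∈ l := (Finset.mem_sort _).mpr hu
    obtain ⟨⟨r, hr⟩, hru⟩ := List.mem_iff_get.mp this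
    exact ⟨r, hr, by rw [htget r hr, hru]⟩
  have htstrict : ∀ a b, a < b → b < k → t a < t b := by
    intro a b hab hbk
    rw [htget a (lt_trans hab hbk), htget b hbk]
    exact List.pairwise_iff_get.mp ((Finset.sortedLT_sort T).pairwise) ⟨a, _⟩ ⟨b, _⟩ hab
  have htmono : ∀ a b, a ≤ b → b < k → t a ≤ t b := by
    intro a b hab hbk
    rcases eq_or_lt_of_le hab with rfl | h
    · exact le_refl _
    · exact (htstrict a b h hbk).le
  have ht0 : t 0 = 0 := by
    obtain ⟨r, hr, hru⟩ := htsurj 0 h0T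
    have h1 : t 0 ≤ t r := htmono 0 r (Nat.zero_le r) hr
    have h2 : (0:ℝ) ≤ t 0 := (hT01 _ (htmemT 0 hk1)).1
    rw [hru] at h1
    linarith
  have htlast : t (k - 1) = 1 := by
    obtain ⟨r, hr, hru⟩ := htsurj 1 h1T
    have h1 : t r ≤ t (k - 1) := htmono r (k - 1) (by omega) (by omega)
    have h2 : t (k - 1) ≤ 1 := (hT01 _ (htmemT (k - 1) (by omega))).2
    rw [hru] at h1
    linarith
  have ht01 : ∀ r < k, t r ∈ Set.Icc (0:ℝ) 1 := fun r hr => hT01 _ (htmemT r hr)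
  have hgap : ∀ r, r + 1 < k → ∀ u ∈ T, u ≤ t r ∨ t (r + 1) ≤ u := by
    intro r hr u hu
    obtain ⟨j, hj, rfl⟩ := htsurj u hu
    rcases le_or_gt j r with h | h
    · exact Or.inl (htmono j r h (by omega))
    · exact Or.inr (htmono (r + 1) j h hj)
  -- midpoints
  set q : ℕ → ℝ := fun r => (t r + t (r + 1)) / 2 with hqdef
  have hqlt1 : ∀ r, r + 1 < k → t r < q r := by
    intro r hr
    have := htstrict r (r + 1) (by omega) hr
    rw [hqdef]; dsimp only; linarith
  have hqlt2 : ∀ r, r + 1 < k → q r < t (r + 1) := by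
    intro r hr
    have := htstrict r (r + 1) (by omega) hr
    rw [hqdef]; dsimp only; linarith
  -- key adjacency
  have key : ∀ r, r + 1 < k →
      (c (t r) ⊆ c (q r) ∧ c (t (r + 1)) ⊆ c (q r)) ∨
      (c (q r) ⊆ c (t r) ∧ c (q r) ⊆ c (t (r + 1))) := by
    intro r hrk
    have htr01 : t r ∈ Set.Icc (0:ℝ) 1 := ht01 r (by omega)
    have htr101 : t (r + 1) ∈ Set.Icc (0:ℝ) 1 := ht01 (r + 1) hrk
    have hq1 := hqlt1 r hrk
    have hq2 := hqlt2 r hrk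
    rcases hoc with hopen | hclosed
    · left
      constructor
      · intro i hi
        have hziU : z (t r) ∈ U i := hi
        have htrS : t r ∈ S i := ⟨htr01, hziU⟩
        have hne : (S i).Nonempty := ⟨t r, htrS⟩
        -- find u ∈ S i with t r < u
        have hPopen : IsOpen (P i) := (hopen i).preimage hzc
        obtain ⟨ε, hε, hball⟩ := Metric.isOpen_iff.mp hPopen (t r) hziU
        have htrlt1 : t r < 1 := lt_of_lt_of_le (lt_trans hq1 hq2) htr101.2
        set u : ℝ := min (t r + ε / 2) ((t r + 1) / 2) with hudef
        have hu1 : t r < u := by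
          rw [hudef]; apply lt_min <;> linarith
        have hu2 : u ≤ 1 := by
          rw [hudef]
          exact le_trans (min_le_right _ _) (by linarith)
        have huP : u ∈ P i := by
          apply hball
          rw [Real.ball_eq_Ioo]
          constructor
          · linarith [htr01.1]
          · exact lt_of_le_of_lt (min_le_left _ _) (by linarith)
        have huS : u ∈ S i := ⟨⟨by linarith [htr01.1], hu2⟩, huP⟩
        have hsup : t (r + 1) ≤ sSup (S i) := by
          rcases hgap r hrk _ (hsupT i) with h | h
          · exact absurd (lt_of_lt_of_le hu1 (le_csSup (hSbddA i) huS)) (not_lt.mpr h)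
          · exact h
        have hinf : sInf (S i) ≤ t r := csInf_le (hSbddB i) htrS
        have : q r ∈ S i := hioo i hne ⟨lt_of_le_of_lt hinf hq1, lt_of_lt_of_le hq2 hsup⟩
        exact this.2
      · intro i hi
        have hziU : z (t (r + 1)) ∈ U i := hi
        have htrS : t (r + 1) ∈ S i := ⟨htr101, hziU⟩
        have hne : (S i).Nonempty := ⟨t (r + 1), htrS⟩
        have hPopen : IsOpen (P i) := (hopen i).preimage hzc
        obtain ⟨ε, hε, hball⟩ := Metric.isOpen_iff.mp hPopen (t (r + 1)) hziU
        have htrgt0 : 0 < t (r + 1) := lt_of_le_of_lt htr01.1 (lt_trans hq1 hq2)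
        set u : ℝ := max (t (r + 1) - ε / 2) (t (r + 1) / 2) with hudef
        have hu1 : u < t (r + 1) := by
          rw [hudef]; apply max_lt <;> linarith
        have hu2 : 0 ≤ u := by
          rw [hudef]
          exact le_trans (by linarith) (le_max_right _ _)
        have huP : u ∈ P i := by
          apply hball
          rw [Real.ball_eq_Ioo]
          constructor
          · exact lt_of_lt_of_le (by linarith) (le_max_left _ _)
          · linarith [htr101.2]
        have huS : u ∈ S i := ⟨⟨hu2, by linarith [htr101.2]⟩, huP⟩
        have hinf : sInf (S i) ≤ t r := by
          rcases hgap r hrk _ (hinfT i) with h | h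
          · exact h
          · exact absurd (lt_of_le_of_lt (le_trans h (csInf_le (hSbddB i) huS)) hu1)
              (lt_irrefl _)
        have hsup : t (r + 1) ≤ sSup (S i) := le_csSup (hSbddA i) htrS
        have : q r ∈ S i := hioo i hne ⟨lt_of_le_of_lt hinf hq1, lt_of_lt_of_le hq2 hsup⟩
        exact this.2
    · right
      have hmain : ∀ i, i ∈ c (q r) → t r ∈ S i ∧ t (r + 1) ∈ S i := by
        intro i hi
        have hq01 : q r ∈ Set.Icc (0:ℝ) 1 :=
          ⟨le_trans htr01.1 hq1.le, le_trans hq2.le htr101.2⟩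
        have hqS : q r ∈ S i := ⟨hq01, hi⟩
        have hne : (S i).Nonempty := ⟨q r, hqS⟩
        have hSclosed : IsClosed (S i) := IsClosed.inter isClosed_Icc ((hclosed i).preimage hzc)
        have hainS : sInf (S i) ∈ S i := hSclosed.csInf_mem hne (hSbddB i)
        have hbinS : sSup (S i) ∈ S i := hSclosed.csSup_mem hne (hSbddA i)
        have ha : sInf (S i) ≤ t r := by
          rcases hgap r hrk _ (hinfT i) with h | h
          · exact h
          · exact absurd (lt_of_le_of_lt (le_trans h (csInf_le (hSbddB i) hqS)) hq2)
              (lt_irrefl _)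
        have hb : t (r + 1) ≤ sSup (S i) := by
          rcases hgap r hrk _ (hsupT i) with h | h
          · exact absurd (lt_of_lt_of_le hq1 (le_csSup (hSbddA i) hqS)) (not_lt.mpr h)
          · exact h
        constructor
        · exact (hSconv i).ordConnected.out hainS hbinS ⟨ha, le_trans hq1.le (le_trans hq2.le hb)⟩
        · exact (hSconv i).ordConnected.out hainS hbinS ⟨le_trans ha (le_trans hq1.le hq2.le), hb⟩
      exact ⟨fun i hi => (hmain i hi).1.2, fun i hi => (hmain i hi).2.2⟩
  -- the walk
  set L : ℕ := 2 * (k - 1) + 1 with hLdef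
  set w : ℕ → ℝ := fun r => if r % 2 = 0 then t (r / 2) else q (r / 2) with hwdef
  have hweval : ∀ r, w r = if r % 2 = 0 then t (r / 2) else q (r / 2) := fun r => rfl
  have hw0 : w 0 = 0 := by rw [hweval]; norm_num; exact ht0
  have hwlast : w (L - 1) = 1 := by
    rw [hweval]
    have h1 : (L - 1) % 2 = 0 := by omega
    have h2 : (L - 1) / 2 = k - 1 := by omega
    rw [if_pos h1, h2, htlast]
  have hwstep : ∀ r, r + 1 < L → w r ≤ w (r + 1) := by
    intro r hr
    rcases Nat.even_or_odd r with he | ho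
    · obtain ⟨u, rfl⟩ := he
      have h1 : (u + u) % 2 = 0 := by omega
      have h2 : (u + u) / 2 = u := by omega
      have h3 : (u + u + 1) % 2 = 1 := by omega
      have h4 : (u + u + 1) / 2 = u := by omega
      have huk : u + 1 < k := by omega
      rw [hweval, hweval, if_pos h1, if_neg (by omega), h2, h4]
      exact (hqlt1 u huk).le
    · obtain ⟨u, rfl⟩ := ho
      have huk : u + 1 < k := by omega
      have h2 : (2 * u + 1) / 2 = u := by omega
      have h4 : (2 * u + 1 + 1) / 2 = u + 1 := by omega
      rw [hweval, hweval, if_neg (by omega), if_pos (by omega), h2, h4]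
      exact (hqlt2 u huk).le
  have hwmono : ∀ b, b < L → ∀ a, a ≤ b → w a ≤ w b := by
    intro b
    induction b with
    | zero =>
      intro _ a ha
      have haz : a = 0 := Nat.le_zero.mp ha
      rw [haz]
    | succ m ih =>
      intro hbL a ha
      rcases eq_or_lt_of_le ha with rfl | h
      · exact le_refl _
      · exact le_trans (ih (by omega) a (by omega)) (hwstep m (by omega))
  have hw01 : ∀ r < L, w r ∈ Set.Icc (0:ℝ) 1 := by
    intro r hr
    constructor
    · rw [← hw0]; exact hwmono r hr 0 (Nat.zero_le r)
    · rw [← hwlast]; exact hwmono (L - 1) (by omega) r (by omega)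
  have hwalk : FeasibleWalk C L (fun r => c (w r)) := by
    refine ⟨by omega, fun r _ => hmemC (w r), ?_, ?_⟩
    · intro r hr
      show c (w r) ⊆ c (w (r + 1)) ∨ c (w (r + 1)) ⊆ c (w r)
      rcases Nat.even_or_odd r with he | ho
      · obtain ⟨u, rfl⟩ := he
        have huk : u + 1 < k := by omega
        have h2 : (u + u) / 2 = u := by omega
        have h4 : (u + u + 1) / 2 = u := by omega
        rw [hweval (u + u), hweval (u + u + 1), if_pos (by omega), if_neg (by omega), h2, h4]
        rcases key u huk with ⟨h, _⟩ | ⟨h, _⟩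
        · exact Or.inl h
        · exact Or.inr h
      · obtain ⟨u, rfl⟩ := ho
        have huk : u + 1 < k := by omega
        have h2 : (2 * u + 1) / 2 = u := by omega
        have h4 : (2 * u + 1 + 1) / 2 = u + 1 := by omega
        rw [hweval (2 * u + 1), hweval (2 * u + 1 + 1), if_neg (by omega), if_pos (by omega),
          h2, h4]
        rcases key u huk with ⟨_, h⟩ | ⟨_, h⟩
        · exact Or.inr h
        · exact Or.inl h
    · intro a m b ham hmb hbL
      exact horder (w a) (w m) (w b) (hwmono m (by omega) a (by omega))
        (hwmono b hbL m (by omega))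
  obtain ⟨L', p', hpath, h0, hlast, hsub⟩ := exists_path_of_walk C L _ hwalk
  have hp0 : p' 0 = σ := by rw [h0]; show c (w 0) = σ; rw [hw0, hc0]
  have hpl : p' (L' - 1) = τ := by
    rw [hlast]; show c (w (L - 1)) = τ; rw [hwlast, hc1]
  obtain ⟨r, hrL', hrv⟩ := hforced L' p' hpath hp0 hpl
  obtain ⟨s, hsL, hps⟩ := hsub r hrL'
  have hveq : v = c (w s) := by rw [← hrv, hps]
  refine ⟨z (w s), hzseg (w s) (hw01 s hsL), ?_⟩
  rw [hveq]
  exact hatom (w s)
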